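/- Let ((Δ_i)_{i≥0}, (ψ_i)_{i≥0}) be a 1-parameter formal deformation of a Coder pair (C, ψ_C), and suppose n ≥ 1 is such that (Δ_i, ψ_i) = (0, 0) for all 1 ≤ i ≤ n. Then (Δ_{n+1}, ψ_{n+1}) is a 2-cocycle of the Coder-pair complex of (C, ψ_C) with coefficients in the coadjoint bicomodule: δ_c(Δ_{n+1}) = 0 and δ_c(ψ_{n+1}) + ω(Δ_{n+1}) = 0. -/

import Mathlib

open TensorProduct LinearMap

variable {k C : Type} [Field k] [AddCommGroup C] [Module k C]

/-- `δ_c(g) = (Id_C ⊗ g) ∘ Δ − Δ ∘ g + (g ⊗ Id_C) ∘ Δ` for `g ∈ Hom(C, C)`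
(coadjoint coefficients). -/
noncomputable def delta1 (Δ : C →ₗ[k] C ⊗[k] C) (g : C →ₗ[k] C) : C →ₗ[k] C ⊗[k] C :=
  LinearMap.lTensor C g ∘ₗ Δ - Δ ∘ₗ g + LinearMap.rTensor C g ∘ₗ Δ

/-- `δ_c(f) = (Id_C ⊗ f) ∘ Δ − (Δ ⊗ Id_C) ∘ f + (Id_C ⊗ Δ) ∘ f − (f ⊗ Id_C) ∘ Δ`
for `f ∈ Hom(C, C ⊗ C)` (coadjoint coefficients). -/
noncomputable def delta2 (Δ : C →ₗ[k] C ⊗[k] C) (f : C →ₗ[k] C ⊗[k] C) :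
    C →ₗ[k] C ⊗[k] (C ⊗[k] C) :=
  LinearMap.lTensor C f ∘ₗ Δ
    - (TensorProduct.assoc k C C C).toLinearMap ∘ₗ LinearMap.rTensor C Δ ∘ₗ f
    + LinearMap.lTensor C Δ ∘ₗ f
    - (TensorProduct.assoc k C C C).toLinearMap ∘ₗ LinearMap.rTensor C f ∘ₗ Δ

/-- `ω(g) = ψ_C ∘ g − g ∘ ψ_C` for `g ∈ Hom(C, C)`. -/
noncomputable def omega1 (ψC : C →ₗ[k] C) (g : C →ₗ[k] C) : C →ₗ[k] C :=
  ψC ∘ₗ g - g ∘ₗ ψC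

/-- `ω(f) = (ψ_C ⊗ Id_C) ∘ f + (Id_C ⊗ ψ_C) ∘ f − f ∘ ψ_C` for `f ∈ Hom(C, C ⊗ C)`. -/
noncomputable def omega2 (ψC : C →ₗ[k] C) (f : C →ₗ[k] C ⊗[k] C) : C →ₗ[k] C ⊗[k] C :=
  LinearMap.rTensor C ψC ∘ₗ f + LinearMap.lTensor C ψC ∘ₗ f - f ∘ₗ ψC

/-- A 1-parameter formal deformation `(Δ_t = Σ Δ_i t^i, ψ_t = Σ ψ_i t^i)` of a Coder
pair `(C, ψ_C)`: `Δ_0 = Δ`, `ψ_0 = ψ_C`, and for every `k ≥ 0`,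
`Σ_{i+j=k} ((Id_C ⊗ Δ_i) ∘ Δ_j − (Δ_i ⊗ Id_C) ∘ Δ_j) = 0` and
`Σ_{i+j=k} (Δ_i ∘ ψ_j − (ψ_i ⊗ Id_C) ∘ Δ_j − (Id_C ⊗ ψ_i) ∘ Δ_j) = 0`. -/
noncomputable def IsFormalDeformation (Δ : C →ₗ[k] C ⊗[k] C) (ψC : C →ₗ[k] C)
    (Δs : ℕ → (C →ₗ[k] C ⊗[k] C)) (ψs : ℕ → (C →ₗ[k] C)) : Prop :=
  Δs 0 = Δ ∧ ψs 0 = ψC ∧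
  (∀ n : ℕ, ∑ p ∈ Finset.HasAntidiagonal.antidiagonal n, LinearMap.lTensor C (Δs p.1) ∘ₗ Δs p.2
      = ∑ p ∈ Finset.HasAntidiagonal.antidiagonal n,
          (TensorProduct.assoc k C C C).toLinearMap ∘ₗ LinearMap.rTensor C (Δs p.1) ∘ₗ Δs p.2) ∧
  (∀ n : ℕ, ∑ p ∈ Finset.HasAntidiagonal.antidiagonal n, Δs p.1 ∘ₗ ψs p.2
      = ∑ p ∈ Finset.HasAntidiagonal.antidiagonal n,
          (LinearMap.rTensor C (ψs p.1) ∘ₗ Δs p.2 + LinearMap.lTensor C (ψs p.1) ∘ₗ Δs p.2))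


private lemma sum_antidiagonal_ends {M : Type*} [AddCommMonoid M] (n : ℕ) (F : ℕ → ℕ → M)
    (h : ∀ i, 1 ≤ i → i ≤ n → F i (n + 1 - i) = 0) :
    ∑ p ∈ Finset.HasAntidiagonal.antidiagonal (n + 1), F p.1 p.2 = F 0 (n + 1) + F (n + 1) 0 := by
  rw [Finset.Nat.sum_antidiagonal_eq_sum_range_succ_mk, Finset.sum_range_succ]
  simp only [Nat.sub_self]
  congr 1
  rw [Finset.sum_eq_single_of_mem 0 (Finset.mem_range.mpr (Nat.succ_pos _))]
  · simp
  · intro i hi hne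
    exact h i (Nat.one_le_iff_ne_zero.mpr hne) (Nat.lt_succ_iff.mp (Finset.mem_range.mp hi))

/-- If a 1-parameter formal deformation of a Coder pair `(C, ψ_C)` has
`(Δ_i, ψ_i) = 0` for all `1 ≤ i ≤ n`, then `(Δ_{n+1}, ψ_{n+1})` is a 2-cocycle of the
Coder-pair complex with coefficients in the coadjoint bicomodule:
`δ_c(Δ_{n+1}) = 0` and `δ_c(ψ_{n+1}) + ω(Δ_{n+1}) = 0`. -/
theorem first_nonzero_term_is_two_cocycle [CharZero k]
    (Δ : C →ₗ[k] C ⊗[k] C)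
    (hΔ : (TensorProduct.assoc k C C C).toLinearMap ∘ₗ LinearMap.rTensor C Δ ∘ₗ Δ
        = LinearMap.lTensor C Δ ∘ₗ Δ)
    (ψC : C →ₗ[k] C)
    (hψC : Δ ∘ₗ ψC = LinearMap.rTensor C ψC ∘ₗ Δ + LinearMap.lTensor C ψC ∘ₗ Δ)
    (Δs : ℕ → (C →ₗ[k] C ⊗[k] C)) (ψs : ℕ → (C →ₗ[k] C))
    (hdef : IsFormalDeformation Δ ψC Δs ψs)
    (n : ℕ) (hn : 1 ≤ n)
    (hvanish : ∀ i : ℕ, 1 ≤ i → i ≤ n → Δs i = 0 ∧ ψs i = 0) :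
    delta2 Δ (Δs (n + 1)) = 0 ∧ delta1 Δ (ψs (n + 1)) + omega2 ψC (Δs (n + 1)) = 0 := by
  obtain ⟨h0, h0', hco, hcd⟩ := hdef
  have key1 := hco (n + 1)
  have key2 := hcd (n + 1)
  rw [sum_antidiagonal_ends n (fun i j => LinearMap.lTensor C (Δs i) ∘ₗ Δs j)
      (by intro i h1 h2; simp [(hvanish i h1 h2).1]),
    sum_antidiagonal_ends n
      (fun i j => (TensorProduct.assoc k C C C).toLinearMap ∘ₗ LinearMap.rTensor C (Δs i) ∘ₗ Δs j)
      (by intro i h1 h2; simp [(hvanish i h1 h2).1]), h0] at key1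
  rw [sum_antidiagonal_ends n (fun i j => Δs i ∘ₗ ψs j)
      (by intro i h1 h2; simp [(hvanish i h1 h2).1]),
    sum_antidiagonal_ends n
      (fun i j => LinearMap.rTensor C (ψs i) ∘ₗ Δs j + LinearMap.lTensor C (ψs i) ∘ₗ Δs j)
      (by intro i h1 h2; simp [(hvanish i h1 h2).2]), h0, h0'] at key2
  constructor
  · have : delta2 Δ (Δs (n + 1))
        = (LinearMap.lTensor C Δ ∘ₗ Δs (n + 1) + LinearMap.lTensor C (Δs (n + 1)) ∘ₗ Δ)
          - ((TensorProduct.assoc k C C C).toLinearMap ∘ₗ LinearMap.rTensor C Δ ∘ₗ Δs (n + 1)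
            + (TensorProduct.assoc k C C C).toLinearMap ∘ₗ LinearMap.rTensor C (Δs (n + 1)) ∘ₗ Δ) := by
      unfold delta2; abel
    rw [this, key1, sub_self (G := C →ₗ[k] C ⊗[k] (C ⊗[k] C))]
  · have : delta1 Δ (ψs (n + 1)) + omega2 ψC (Δs (n + 1))
        = (LinearMap.rTensor C ψC ∘ₗ Δs (n + 1) + LinearMap.lTensor C ψC ∘ₗ Δs (n + 1)
            + (LinearMap.rTensor C (ψs (n + 1)) ∘ₗ Δ + LinearMap.lTensor C (ψs (n + 1)) ∘ₗ Δ))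
          - (Δ ∘ₗ ψs (n + 1) + Δs (n + 1) ∘ₗ ψC) := by
      unfold delta1 omega2; abel
    rw [this, ← key2, sub_self (G := C →ₗ[k] C ⊗[k] C)]
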